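/- For an infinite array (a_{i,j})_{i,j∈ℤ} of elements of a field, let D_{i,j}^ℓ denote the determinant of the ℓ×ℓ submatrix with rows i,…,i+ℓ−1 and columns j,…,j+ℓ−1, with the convention D_{i,j}^0 = 1. Then for all i,j ∈ ℤ and all ℓ ≥ 1, Sylvester's determinant identity holds: D_{i,j}^{ℓ+1} · D_{i+1,j+1}^{ℓ−1} = D_{i,j}^ℓ · D_{i+1,j+1}^ℓ − D_{i+1,j}^ℓ · D_{i,j+1}^ℓ. -/

import Mathlib

open Matrix

namespace SylvesterAux

variable {R : Type*} [CommRing R] {n : ℕ}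

/-- The auxiliary matrix: identity with first and last columns replaced by the
corresponding columns of the adjugate. -/
noncomputable def sylB (M : Matrix (Fin (n + 2)) (Fin (n + 2)) R) :
    Matrix (Fin (n + 2)) (Fin (n + 2)) R :=
  Matrix.of fun i j =>
    if j = 0 ∨ j = Fin.last (n + 1) then M.adjugate i j
    else (1 : Matrix (Fin (n + 2)) (Fin (n + 2)) R) i j

lemma mul_sylB (M : Matrix (Fin (n + 2)) (Fin (n + 2)) R) :
    M * sylB M = Matrix.of fun i j =>
      if j = 0 ∨ j = Fin.last (n + 1) then
        M.det * (1 : Matrix (Fin (n + 2)) (Fin (n + 2)) R) i j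
      else M i j := by
  ext i j
  rw [mul_apply, of_apply]
  by_cases h : j = 0 ∨ j = Fin.last (n + 1)
  · simp only [sylB, of_apply, h, if_true]
    have : ∑ k, M i k * M.adjugate k j = (M * M.adjugate) i j := (mul_apply).symm
    rw [this, Matrix.mul_adjugate, Matrix.smul_apply, smul_eq_mul]
  · simp only [sylB, of_apply, h, if_false]
    simp [one_apply, mul_ite, Finset.sum_ite_eq']

lemma det_mul_sylB (M : Matrix (Fin (n + 2)) (Fin (n + 2)) R) :
    (M * sylB M).det =
      M.det * (M.det *
        (M.submatrix (Fin.succ ∘ Fin.castSucc) (Fin.succ ∘ Fin.castSucc)).det) := by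
  rw [mul_sylB]
  set P : Matrix (Fin (n + 2)) (Fin (n + 2)) R := Matrix.of fun i j =>
    if j = 0 ∨ j = Fin.last (n + 1) then
      M.det * (1 : Matrix (Fin (n + 2)) (Fin (n + 2)) R) i j
    else M i j with hP
  rw [det_succ_column_zero]
  rw [Finset.sum_eq_single 0]
  · have h00 : P 0 0 = M.det := by
      simp [hP, one_apply_eq]
    rw [h00]
    simp only [Fin.val_zero, pow_zero, one_mul, Fin.succAbove_zero]
    congr 1
    -- now expand the (n+1)×(n+1) determinant along its last column
    rw [det_succ_column _ (Fin.last n)]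
    rw [Finset.sum_eq_single (Fin.last n)]
    · have hll : (P.submatrix Fin.succ Fin.succ) (Fin.last n) (Fin.last n) = M.det := by
        simp [hP, Fin.succ_last, one_apply_eq]
      rw [hll]
      simp only [Fin.val_last, Fin.succAbove_last]
      rw [show (-1 : R) ^ (n + n) = 1 from Even.neg_one_pow ⟨n, rfl⟩, one_mul]
      congr 1
      congr 1
      ext r s
      have h1 : (Fin.castSucc r).succ ≠ (0 : Fin (n + 2)) := Fin.succ_ne_zero _
      have h2 : (Fin.castSucc s).succ ≠ Fin.last (n + 1) := by
        rw [← Fin.succ_last]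
        exact fun h => absurd (Fin.succ_injective _ h)
          (Fin.ne_last_of_lt (Fin.castSucc_lt_last s))
      simp [hP, h2, Fin.succ_ne_zero]
    · intro i _ hi
      have : (P.submatrix Fin.succ Fin.succ) i (Fin.last n) = 0 := by
        have hne : i.succ ≠ Fin.last (n + 1) := by
          rw [← Fin.succ_last]
          exact fun h => hi (Fin.succ_injective _ h)
        simp [hP, Fin.succ_last, one_apply_ne hne]
      rw [this, mul_zero, zero_mul]
    · intro h; exact absurd (Finset.mem_univ _) h
  · intro i _ hi
    have : P i 0 = 0 := by simp [hP, one_apply_ne hi]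
    rw [this, mul_zero, zero_mul]
  · intro h; exact absurd (Finset.mem_univ _) h

lemma det_sylB (M : Matrix (Fin (n + 2)) (Fin (n + 2)) R) :
    (sylB M).det =
      (M.submatrix Fin.succ Fin.succ).det *
          (M.submatrix Fin.castSucc Fin.castSucc).det -
        (M.submatrix Fin.castSucc Fin.succ).det *
          (M.submatrix Fin.succ Fin.castSucc).det := by
  classical
  have hl0 : (Fin.last (n + 1)) ≠ (0 : Fin (n + 2)) := by
    simp [Fin.ext_iff]
  set c : Fin 2 → Fin (n + 2) := ![0, Fin.last (n + 1)] with hc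
  have hc0 : c 0 = 0 := rfl
  have hc1 : c 1 = Fin.last (n + 1) := rfl
  set U : Matrix (Fin (n + 2)) (Fin 2) R := Matrix.of fun i g =>
    M.adjugate i (c g) - (1 : Matrix (Fin (n + 2)) (Fin (n + 2)) R) i (c g) with hU
  set V : Matrix (Fin 2) (Fin (n + 2)) R := Matrix.of fun g j =>
    (1 : Matrix (Fin (n + 2)) (Fin (n + 2)) R) (c g) j with hV
  have hB : sylB M = 1 + U * V := by
    ext i j
    rw [Matrix.add_apply, mul_apply, Fin.sum_univ_two]
    have eU : ∀ g, U i g = M.adjugate i (c g) -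
        (1 : Matrix (Fin (n + 2)) (Fin (n + 2)) R) i (c g) := fun g => rfl
    have eV : ∀ g j, V g j = (1 : Matrix (Fin (n + 2)) (Fin (n + 2)) R) (c g) j :=
      fun g j => rfl
    rw [eU, eU, eV, eV, hc0, hc1]
    by_cases h0 : j = 0
    · subst h0
      rw [one_apply_ne hl0, one_apply_eq, mul_zero, mul_one]
      have : sylB M i 0 = M.adjugate i 0 := by simp [sylB]
      rw [this]
      ring
    · by_cases hl : j = Fin.last (n + 1)
      · subst hl
        rw [one_apply_ne (Ne.symm hl0), one_apply_eq, mul_zero, mul_one]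
        have : sylB M i (Fin.last (n + 1)) = M.adjugate i (Fin.last (n + 1)) := by
          simp [sylB]
        rw [this]
        ring
      · rw [one_apply_ne (Ne.symm h0), one_apply_ne (Ne.symm hl), mul_zero, mul_zero]
        have : sylB M i j = (1 : Matrix (Fin (n + 2)) (Fin (n + 2)) R) i j := by
          simp [sylB, h0, hl]
        rw [this]
        ring
  have hVU : ∀ g h, (V * U) g h = M.adjugate (c g) (c h) -
      (1 : Matrix (Fin (n + 2)) (Fin (n + 2)) R) (c g) (c h) := by
    intro g h
    rw [mul_apply]
    have : ∀ k, V g k * U k h = if c g = k then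
        (M.adjugate k (c h) - (1 : Matrix (Fin (n + 2)) (Fin (n + 2)) R) k (c h)) else 0 := by
      intro k
      show (1 : Matrix (Fin (n + 2)) (Fin (n + 2)) R) (c g) k * _ = _
      rw [one_apply]
      by_cases hk : c g = k
      · rw [if_pos hk, if_pos hk, one_mul]; rfl
      · rw [if_neg hk, if_neg hk, zero_mul]
    simp_rw [this]
    rw [Finset.sum_ite_eq]
    simp
  have key2 : ∀ g h, (1 + V * U : Matrix (Fin 2) (Fin 2) R) g h = M.adjugate (c g) (c h) +
      ((1 : Matrix (Fin 2) (Fin 2) R) g h -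
        (1 : Matrix (Fin (n + 2)) (Fin (n + 2)) R) (c g) (c h)) := by
    intro g h
    rw [Matrix.add_apply, hVU]
    ring
  have e00 : (1 + V * U : Matrix (Fin 2) (Fin 2) R) 0 0 = M.adjugate 0 0 := by
    rw [key2, hc0, one_apply_eq, one_apply_eq]; ring
  have e11 : (1 + V * U : Matrix (Fin 2) (Fin 2) R) 1 1 = M.adjugate (Fin.last (n + 1)) (Fin.last (n + 1)) := by
    rw [key2, hc1, one_apply_eq, one_apply_eq]; ring
  have e01 : (1 + V * U : Matrix (Fin 2) (Fin 2) R) 0 1 = M.adjugate 0 (Fin.last (n + 1)) := by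
    rw [key2, hc0, hc1, one_apply_ne (Ne.symm hl0),
      one_apply_ne (show (0 : Fin 2) ≠ 1 by decide)]
    ring
  have e10 : (1 + V * U : Matrix (Fin 2) (Fin 2) R) 1 0 = M.adjugate (Fin.last (n + 1)) 0 := by
    rw [key2, hc0, hc1, one_apply_ne hl0,
      one_apply_ne (show (1 : Fin 2) ≠ 0 by decide)]
    ring
  rw [hB, det_one_add_mul_comm, det_fin_two, e00, e11, e01, e10]
  rw [adjugate_fin_succ_eq_det_submatrix, adjugate_fin_succ_eq_det_submatrix,
    adjugate_fin_succ_eq_det_submatrix, adjugate_fin_succ_eq_det_submatrix]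
  simp only [Fin.val_zero, Fin.val_last, Fin.succAbove_zero, Fin.succAbove_last,
    Nat.add_zero, Nat.zero_add, pow_zero, one_mul]
  have hpow : (-1 : R) ^ (n + 1) * (-1 : R) ^ (n + 1) = 1 := by
    rw [← pow_add]
    exact Even.neg_one_pow ⟨n + 1, rfl⟩
  rw [show (-1 : R) ^ (n + 1 + (n + 1)) = 1 from Even.neg_one_pow ⟨n + 1, rfl⟩, one_mul]
  calc (M.submatrix Fin.succ Fin.succ).det *
        (M.submatrix Fin.castSucc Fin.castSucc).det -
      (-1 : R) ^ (n + 1) * (M.submatrix Fin.castSucc Fin.succ).det *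
        ((-1 : R) ^ (n + 1) * (M.submatrix Fin.succ Fin.castSucc).det)
      = (M.submatrix Fin.succ Fin.succ).det *
          (M.submatrix Fin.castSucc Fin.castSucc).det -
        ((-1 : R) ^ (n + 1) * (-1 : R) ^ (n + 1)) *
          ((M.submatrix Fin.castSucc Fin.succ).det *
            (M.submatrix Fin.succ Fin.castSucc).det) := by ring
    _ = _ := by rw [hpow, one_mul]

/-- Desnanot–Jacobi (Dodgson condensation) identity over a commutative ring. -/
lemma desnanot (M : Matrix (Fin (n + 2)) (Fin (n + 2)) R) :
    M.det * (M.submatrix (Fin.succ ∘ Fin.castSucc) (Fin.succ ∘ Fin.castSucc)).det =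
      (M.submatrix Fin.succ Fin.succ).det *
          (M.submatrix Fin.castSucc Fin.castSucc).det -
        (M.submatrix Fin.castSucc Fin.succ).det *
          (M.submatrix Fin.succ Fin.castSucc).det := by
  let M' := mvPolynomialX (Fin (n + 2)) (Fin (n + 2)) ℤ
  have key : M'.det * (M'.submatrix (Fin.succ ∘ Fin.castSucc) (Fin.succ ∘ Fin.castSucc)).det =
      (M'.submatrix Fin.succ Fin.succ).det *
          (M'.submatrix Fin.castSucc Fin.castSucc).det -
        (M'.submatrix Fin.castSucc Fin.succ).det *
          (M'.submatrix Fin.succ Fin.castSucc).det := by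
    apply mul_left_cancel₀ (show M'.det ≠ 0 from det_mvPolynomialX_ne_zero _ ℤ)
    calc M'.det * (M'.det *
          (M'.submatrix (Fin.succ ∘ Fin.castSucc) (Fin.succ ∘ Fin.castSucc)).det)
        = (M' * sylB M').det := (det_mul_sylB M').symm
      _ = M'.det * (sylB M').det := det_mul _ _
      _ = _ := by rw [det_sylB]
  set φ : MvPolynomial ((Fin (n + 2)) × (Fin (n + 2))) ℤ →ₐ[ℤ] R :=
    MvPolynomial.aeval fun p : (Fin (n + 2)) × (Fin (n + 2)) => M p.1 p.2 with hφ
  have hmap := congrArg φ key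
  have hM : φ.mapMatrix M' = M := mvPolynomialX_mapMatrix_aeval ℤ M
  have hsub : ∀ (m : ℕ) (f g : Fin m → Fin (n + 2)),
      φ ((M'.submatrix f g).det) = ((M.submatrix f g).det) := by
    intro m f g
    rw [AlgHom.map_det]
    congr 1
    rw [AlgHom.mapMatrix_apply, ← Matrix.submatrix_map, ← AlgHom.mapMatrix_apply, hM]
  rw [_root_.map_mul, _root_.map_sub, _root_.map_mul, _root_.map_mul, AlgHom.map_det, hM] at hmap
  simp only [hsub] at hmap
  exact hmap

end SylvesterAux

/-- The ℓ×ℓ adjacent minor of the array `a` at position `(i,j)`: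
the determinant of the matrix with rows `i,…,i+ℓ-1` and columns `j,…,j+ℓ-1`.
For `ℓ = 0` this is the determinant of the empty matrix, which is `1`. -/
def adjMinor {K : Type*} [Field K] (a : ℤ → ℤ → K) (ℓ : ℕ) (i j : ℤ) : K :=
  Matrix.det (Matrix.of fun r s : Fin ℓ => a (i + (r : ℤ)) (j + (s : ℤ)))

/-- Sylvester's determinant identity for adjacent minors of a doubly infinite array. -/
theorem sylvester_identity {K : Type*} [Field K] (a : ℤ → ℤ → K) :
    ∀ (i j : ℤ) (ℓ : ℕ), 1 ≤ ℓ →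
      adjMinor a (ℓ + 1) i j * adjMinor a (ℓ - 1) (i + 1) (j + 1)
        = adjMinor a ℓ i j * adjMinor a ℓ (i + 1) (j + 1)
          - adjMinor a ℓ (i + 1) j * adjMinor a ℓ i (j + 1) := by
  intro i j ℓ hℓ
  obtain ⟨n, rfl⟩ : ∃ n, ℓ = n + 1 := ⟨ℓ - 1, by omega⟩
  set M : Matrix (Fin (n + 2)) (Fin (n + 2)) K :=
    Matrix.of fun r s : Fin (n + 2) => a (i + (r : ℤ)) (j + (s : ℤ)) with hM
  have h1 : adjMinor a (n + 1 + 1) i j = M.det := rfl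
  have h2 : adjMinor a (n + 1 - 1) (i + 1) (j + 1) =
      (M.submatrix (Fin.succ ∘ Fin.castSucc) (Fin.succ ∘ Fin.castSucc)).det := by
    show (Matrix.of fun r s : Fin n => a (i + 1 + (r : ℤ)) (j + 1 + (s : ℤ))).det = _
    refine congrArg Matrix.det ?_
    ext r s
    simp only [Matrix.of_apply, Matrix.submatrix_apply, Function.comp_apply, hM,
      Fin.val_succ, Fin.coe_castSucc]
    try push_cast
    try ring_nf
  have h3 : adjMinor a (n + 1) i j = (M.submatrix Fin.castSucc Fin.castSucc).det := by
    refine congrArg Matrix.det ?_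
    ext r s
    simp only [Matrix.of_apply, Matrix.submatrix_apply, hM, Fin.coe_castSucc]
  have h4 : adjMinor a (n + 1) (i + 1) (j + 1) = (M.submatrix Fin.succ Fin.succ).det := by
    refine congrArg Matrix.det ?_
    ext r s
    simp only [Matrix.of_apply, Matrix.submatrix_apply, hM, Fin.val_succ]
    try push_cast
    try ring_nf
  have h5 : adjMinor a (n + 1) (i + 1) j = (M.submatrix Fin.succ Fin.castSucc).det := by
    refine congrArg Matrix.det ?_
    ext r s
    simp only [Matrix.of_apply, Matrix.submatrix_apply, hM, Fin.val_succ, Fin.coe_castSucc]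
    try push_cast
    try ring_nf
  have h6 : adjMinor a (n + 1) i (j + 1) = (M.submatrix Fin.castSucc Fin.succ).det := by
    refine congrArg Matrix.det ?_
    ext r s
    simp only [Matrix.of_apply, Matrix.submatrix_apply, hM, Fin.val_succ, Fin.coe_castSucc]
    try push_cast
    try ring_nf
  rw [h1, h2, h3, h4, h5, h6, SylvesterAux.desnanot M]
  ring
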